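/- Fix integers k ≥ 1 and n ≥ 2, and let a1, ..., an be nonzero real numbers. Assume the Continuum Hypothesis (2^ℵ0 = ℵ1). Then there exists an ℵ0-coloring of ℝ^k such that there are no pairwise distinct vectors e1, ..., en ∈ ℝ^k of the same color satisfying a1·e1 + a2·e2 + ... + an·en = 0 (with scalar multiplication acting componentwise). -/

import Mathlib

open Cardinal Set

set_option maxHeartbeats 1000000 in
set_option synthInstance.maxHeartbeats 1000000 in
theorem CH_implies_no_mono_solution_Rk (k n : ℕ) (hk : 1 ≤ k) (hn : 2 ≤ n)
    (a : Fin n → ℝ) (ha : ∀ i, a i ≠ 0)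
    (ch : (2 : Cardinal) ^ Cardinal.aleph0 = Cardinal.aleph 1) :
    ∃ COL : (Fin k → ℝ) → ℕ,
      ¬ ∃ e : Fin n → (Fin k → ℝ),
        Function.Injective e ∧
        (∀ i j, COL (e i) = COL (e j)) ∧
        ∑ i, a i • e i = 0 := by
  classical
  have ch0 : (2 : Cardinal.{0}) ^ Cardinal.aleph0 = Cardinal.aleph 1 := by
    refine Cardinal.lift_injective ?_
    rw [Cardinal.lift_two_power, Cardinal.lift_aleph0, Cardinal.lift_aleph, Ordinal.lift_one]
    exact ch
  -- the countable subfield generated by the coefficients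
  set F : Subfield ℝ := Subfield.closure (Set.range a) with hFdef
  have haF : ∀ i, a i ∈ F := fun i => Subfield.subset_closure ⟨i, rfl⟩
  have hFcard : #F ≤ ℵ₀ := by
    refine (Subfield.cardinalMk_closure_le_max _).trans ?_
    refine max_le (mk_range_le.trans ?_) le_rfl
    simp only [mk_fin]
    exact (nat_lt_aleph0 n).le
  haveI hFc : Countable F := Cardinal.mk_le_aleph0_iff.mp hFcard
  -- basis of ℝ^k over F
  let b := Module.Basis.ofVectorSpace F (Fin k → ℝ)
  set ι := Module.Basis.ofVectorSpaceIndex F (Fin k → ℝ) with hιdef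
  haveI : Nonempty (Fin k) := ⟨⟨0, hk⟩⟩
  haveI hVnt : Nontrivial (Fin k → ℝ) := ⟨(fun _ => 1), 0, by
    intro h
    have := congrFun h ⟨0, hk⟩
    simp at this⟩
  haveI hιne : Nonempty ι := b.index_nonempty
  -- cardinality bound on the space, hence on the basis
  have hVcard : #(Fin k → ℝ) ≤ Cardinal.aleph 1 := by
    have h1 : #(Fin k → ℝ) ≤ 𝔠 ^ ℵ₀ := by
      rw [mk_arrow, mk_real, lift_continuum]
      refine power_le_power_left continuum_ne_zero ?_
      simpa using (nat_lt_aleph0 k).le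
    have h2 : 𝔠 = Cardinal.aleph 1 := by rw [← ch0, two_power_aleph0]
    rw [continuum_power_aleph0] at h1
    exact h1.trans_eq h2
  have hιW : #ι ≤ #((Cardinal.aleph 1).ord.ToType) := by
    rw [mk_toType, card_ord]
    exact (mk_subtype_le _).trans hVcard
  obtain ⟨f⟩ : Nonempty (ι ↪ (Cardinal.aleph 1).ord.ToType) :=
    Cardinal.le_def _ _ |>.mp hιW
  -- initial segments of ω₁ are countable
  have hWcnt : ∀ w : (Cardinal.aleph 1).ord.ToType, (Set.Iio w).Countable := fun w =>
    (countable_iff_lt_aleph_one _).mpr (Cardinal.mk_Iio_ord_toType w)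
  -- countably many possible "lower parts" below any level
  have hS : ∀ w : (Cardinal.aleph 1).ord.ToType,
      {p : ι →₀ F | (p.support : Set ι) ⊆ f ⁻¹' (Set.Iio w)}.Countable := by
    intro w
    set T : Set ι := f ⁻¹' (Set.Iio w) with hTdef
    haveI : Countable T := ((hWcnt w).preimage f.injective).to_subtype
    rw [Set.countable_iff_exists_injOn]
    obtain ⟨enc, henc⟩ := Countable.exists_injective_nat (T →₀ F)
    refine ⟨fun p => enc (p.subtypeDomain (· ∈ T)), ?_⟩
    intro p hp q hq hpq
    have h2 : p.subtypeDomain (· ∈ T) = q.subtypeDomain (· ∈ T) := henc hpq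
    ext j
    by_cases hj : j ∈ T
    · simpa using DFunLike.congr_fun h2 ⟨j, hj⟩
    · rw [Finsupp.notMem_support_iff.mp (fun hmem => hj (hp hmem)),
        Finsupp.notMem_support_iff.mp (fun hmem => hj (hq hmem))]
  -- choose the injections used in the coloring
  have hgex : ∀ x : ι, ∃ g : (ι →₀ F) → ℕ,
      Set.InjOn g {p : ι →₀ F | (p.support : Set ι) ⊆ f ⁻¹' (Set.Iio (f x))} :=
    fun x => Set.countable_iff_exists_injOn.mp (hS (f x))
  choose g hg using hgex
  obtain ⟨hc, hci⟩ := Countable.exists_injective_nat F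
  -- nonzero vectors have nonempty support
  have hsupp : ∀ v : Fin k → ℝ, v ≠ 0 → ((b.repr v).support.Nonempty) := by
    intro v hv
    rw [Finsupp.support_nonempty_iff]
    exact fun h => hv (b.repr.map_eq_zero_iff.mp h)
  have hμex : ∀ v : Fin k → ℝ, v ≠ 0 → ∃ j : ι, j ∈ (b.repr v).support ∧
      ∀ i ∈ (b.repr v).support, f i ≤ f j := by
    intro v hv
    obtain ⟨j, hj, hjmax⟩ :=
      Finset.exists_max_image (b.repr v).support (fun j => f j) (hsupp v hv)
    exact ⟨j, hj, hjmax⟩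
  -- the maximal basis element appearing in v
  let μ : (Fin k → ℝ) → ι := fun v =>
    if h : v ≠ 0 then (hμex v h).choose else Classical.arbitrary ι
  have hμmem : ∀ v : Fin k → ℝ, (hv : v ≠ 0) → μ v ∈ (b.repr v).support := by
    intro v hv
    simp only [μ, dif_pos hv]
    exact (hμex v hv).choose_spec.1
  have hμmax : ∀ v : Fin k → ℝ, (hv : v ≠ 0) →
      ∀ j ∈ (b.repr v).support, f j ≤ f (μ v) := by
    intro v hv j hj
    simp only [μ, dif_pos hv]
    exact (hμex v hv).choose_spec.2 j hj
  -- erased part lies strictly below the level of μ v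
  have herase : ∀ v : Fin k → ℝ, (hv : v ≠ 0) →
      ((Finsupp.erase (μ v) (b.repr v)).support : Set ι) ⊆ f ⁻¹' (Set.Iio (f (μ v))) := by
    intro v hv j hj
    rw [Finset.mem_coe, Finsupp.support_erase, Finset.mem_erase] at hj
    exact lt_of_le_of_ne (hμmax v hv j hj.2) (fun hcontra => hj.1 (f.injective hcontra))
  -- the coloring
  refine ⟨fun v => if v = 0 then 0 else
    Nat.pair (hc (b.repr v (μ v))) (g (μ v) (Finsupp.erase (μ v) (b.repr v))) + 1, ?_⟩
  rintro ⟨e, hinj, hcol, hsum⟩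
  -- none of the vectors is zero
  have hne : ∀ i, e i ≠ 0 := by
    intro i hi
    have h01 : (⟨0, by omega⟩ : Fin n) ≠ ⟨1, by omega⟩ := by
      intro h
      simpa using congrArg Fin.val h
    have hz : ∀ j, e j = 0 := by
      intro j
      by_contra hj
      have hthis := hcol j i
      simp only [if_pos hi, if_neg hj] at hthis
      exact Nat.succ_ne_zero _ hthis
    exact h01 (hinj ((hz _).trans (hz _).symm))
  -- pick the index with maximal level
  obtain ⟨i0, -, hmax⟩ := Finset.exists_max_image Finset.univ (fun i => f (μ (e i)))
    ⟨⟨0, by omega⟩, Finset.mem_univ _⟩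
  -- all other indices have strictly smaller level
  have huniq : ∀ i, i ≠ i0 → f (μ (e i)) < f (μ (e i0)) := by
    intro i hi
    rcases lt_or_eq_of_le (hmax i (Finset.mem_univ i)) with h | h
    · exact h
    · exfalso
      have hμeq : μ (e i) = μ (e i0) := f.injective h
      have hcoli := hcol i i0
      simp only [if_neg (hne i), if_neg (hne i0)] at hcoli
      have hpair := Nat.succ_injective hcoli
      obtain ⟨h1, h2⟩ := Nat.pair_eq_pair.mp hpair
      have hcc : b.repr (e i) (μ (e i)) = b.repr (e i0) (μ (e i0)) := hci h1
      rw [hμeq] at h2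
      have hee : Finsupp.erase (μ (e i)) (b.repr (e i))
          = Finsupp.erase (μ (e i0)) (b.repr (e i0)) := by
        have h3 := hg (μ (e i0)) (hμeq ▸ herase (e i) (hne i)) (herase (e i0) (hne i0)) h2
        rw [← hμeq] at h3 ⊢
        exact h3
      have hrepr : b.repr (e i) = b.repr (e i0) := by
        rw [← Finsupp.single_add_erase (μ (e i)) (b.repr (e i)),
          ← Finsupp.single_add_erase (μ (e i0)) (b.repr (e i0)), hcc, hee, hμeq]
      exact hi (hinj (b.repr.injective hrepr))
  -- rewrite the linear relation over F
  set A : Fin n → F := fun i => ⟨a i, haF i⟩ with hAdef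
  have hsum' : ∑ i, A i • e i = 0 := by
    rw [← hsum]
    exact Finset.sum_congr rfl fun i _ => rfl
  -- evaluate the representation at the top level
  have h0 : (b.repr (e i0)) (μ (e i0)) ≠ 0 :=
    Finsupp.mem_support_iff.mp (hμmem _ (hne i0))
  have hz : ∀ i, i ≠ i0 → (b.repr (e i)) (μ (e i0)) = 0 := by
    intro i hi
    by_contra hnz
    have hmem : μ (e i0) ∈ (b.repr (e i)).support := Finsupp.mem_support_iff.mpr hnz
    exact absurd (hμmax _ (hne i) _ hmem) (not_le.mpr (huniq i hi))
  have key : ∑ i, (A i : F) * (b.repr (e i)) (μ (e i0)) = 0 := by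
    have h1 := congrArg (fun q : ι →₀ F => q (μ (e i0))) (congrArg b.repr hsum')
    simpa [map_sum, map_smul, Finsupp.coe_finset_sum, Finset.sum_apply,
      Finsupp.smul_apply, smul_eq_mul] using h1
  rw [Finset.sum_eq_single i0 (fun i _ hi => by rw [hz i hi, mul_zero])
    (fun h => absurd (Finset.mem_univ i0) h)] at key
  have hA0 : A i0 ≠ 0 := by
    intro h
    exact ha i0 (by simpa [hAdef, Subtype.ext_iff] using h)
  exact mul_ne_zero hA0 h0 key
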